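/- For every positive integer k and every integer n ≥ 1, the power sum p_n(k) = ∑_{j=1}^{k} j^{n+1} + ∑_{j=k+1}^{2k} (2k - j) j^n is a polynomial in k of degree n + 2 with leading coefficient (2^{n+2} - 2)/((n+1)(n+2)). -/

import Mathlib

/-- The power sum `p_n(k) = ∑_{j=1}^{k} j^{n+1} + ∑_{j=k+1}^{2k} (2k - j) j^n`, as a rational. -/
def powerSum (n k : ℕ) : ℚ :=
  (∑ j ∈ Finset.Icc 1 k, (j : ℚ) ^ (n + 1)) +
    ∑ j ∈ Finset.Icc (k + 1) (2 * k), ((2 * k : ℚ) - j) * (j : ℚ) ^ n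

open Polynomial Finset

/-- Faulhaber polynomial: evaluated at `k` it gives `∑_{j=1}^k j^p`. -/
noncomputable def faul (p : ℕ) : Polynomial ℚ :=
  ∑ i ∈ Finset.range (p + 1),
    Polynomial.C ((bernoulli' i) * ((p + 1).choose i) / (p + 1)) * Polynomial.X ^ (p + 1 - i)

lemma faul_eval (p k : ℕ) :
    (faul p).eval (k : ℚ) = ∑ j ∈ Finset.Icc 1 k, (j : ℚ) ^ p := by
  have h := sum_Ico_pow k p
  rw [show Finset.Icc 1 k = Finset.Ico 1 (k + 1) by rfl, h]
  simp [faul, eval_finset_sum, div_mul_eq_mul_div]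

lemma faul_coeff_top (p : ℕ) : (faul p).coeff (p + 1) = 1 / (p + 1) := by
  rw [faul, finset_sum_coeff]
  rw [Finset.sum_eq_single 0]
  · simp
  · intro i hi hne
    rw [coeff_C_mul, coeff_X_pow, if_neg, mul_zero]
    omega
  · simp

lemma faul_natDegree_le (p : ℕ) : (faul p).natDegree ≤ p + 1 := by
  refine (Polynomial.natDegree_sum_le _ _).trans ?_
  simp only [Finset.fold_max_le]
  refine ⟨by omega, fun i hi => ?_⟩
  exact (natDegree_C_mul_le _ _).trans (by simp [natDegree_X_pow])

lemma faul_coeff_top_ne (p : ℕ) : (faul p).coeff (p + 1) ≠ 0 := by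
  rw [faul_coeff_top]
  positivity

lemma faul_natDegree (p : ℕ) : (faul p).natDegree = p + 1 :=
  le_antisymm (faul_natDegree_le p) (le_natDegree_of_ne_zero (faul_coeff_top_ne p))

lemma faul_leadingCoeff (p : ℕ) : (faul p).leadingCoeff = 1 / (p + 1) := by
  rw [Polynomial.leadingCoeff, faul_natDegree, faul_coeff_top]

theorem stmt_3 (n : ℕ) (hn : 1 ≤ n) :
    ∃ q : Polynomial ℚ, q.natDegree = n + 2 ∧
      q.leadingCoeff = (2 ^ (n + 2) - 2) / ((n + 1) * (n + 2)) ∧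
      ∀ k : ℕ, 0 < k → q.eval (k : ℚ) = powerSum n k := by
  have hn1 : ((n : ℚ) + 1) ≠ 0 := by positivity
  have hn2 : ((n : ℚ) + 2) ≠ 0 := by positivity
  set t : Polynomial ℚ := Polynomial.C 2 * Polynomial.X with ht
  have htd : t.natDegree = 1 := natDegree_C_mul_X 2 two_ne_zero
  have htlc : t.leadingCoeff = 2 := by
    rw [Polynomial.leadingCoeff, htd, ht, coeff_C_mul, coeff_X_one, mul_one]
  have hcompd : ∀ p : ℕ, ((faul p).comp t).natDegree = p + 1 := fun p => by
    rw [natDegree_comp, htd, mul_one, faul_natDegree]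
  have hcomplc : ∀ p : ℕ, ((faul p).comp t).coeff (p + 1) = 1 / (p + 1) * 2 ^ (p + 1) := by
    intro p
    have : ((faul p).comp t).coeff (p + 1) = ((faul p).comp t).leadingCoeff := by
      rw [Polynomial.leadingCoeff, hcompd]
    rw [this, leadingCoeff_comp (by rw [htd]; exact one_ne_zero), faul_leadingCoeff,
      faul_natDegree, htlc]
  set D : Polynomial ℚ := (faul n).comp t - faul n with hD
  have hDd : D.natDegree ≤ n + 1 := by
    refine (natDegree_sub_le _ _).trans ?_
    rw [hcompd, faul_natDegree]
    omega
  have hDc : D.coeff (n + 1) = 1 / (n + 1) * 2 ^ (n + 1) - 1 / (n + 1) := by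
    rw [hD, coeff_sub, hcomplc, faul_coeff_top]
  set q : Polynomial ℚ :=
    Polynomial.C 2 * faul (n + 1) + t * D - (faul (n + 1)).comp t with hq
  set L : ℚ := (2 ^ (n + 2) - 2) / ((n + 1) * (n + 2)) with hL
  have hqc : q.coeff (n + 2) = L := by
    rw [hq, coeff_sub, coeff_add, coeff_C_mul, ht, mul_assoc, coeff_C_mul, coeff_X_mul]
    rw [show n + 2 = (n + 1) + 1 by ring] at *
    rw [hDc, hcomplc, faul_coeff_top, hL]
    push_cast
    field_simp
    ring
  have hLne : L ≠ 0 := by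
    rw [hL]
    have h4 : (4 : ℚ) ≤ 2 ^ (n + 2) := by
      calc (4 : ℚ) = 2 ^ 2 := by norm_num
        _ ≤ 2 ^ (n + 2) := by
          apply pow_le_pow_right₀ (by norm_num)
          omega
    apply div_ne_zero (by linarith) (by positivity)
  have hqd_le : q.natDegree ≤ n + 2 := by
    refine (natDegree_sub_le _ _).trans ?_
    rw [hcompd]
    refine max_le (le_trans (natDegree_add_le _ _) ?_) (by omega)
    refine max_le (le_trans (natDegree_C_mul_le _ _) ?_) ?_
    · rw [faul_natDegree]
    · refine (natDegree_mul_le).trans ?_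
      rw [htd]; omega
  have hqd : q.natDegree = n + 2 :=
    le_antisymm hqd_le (le_natDegree_of_ne_zero (hqc ▸ hLne))
  refine ⟨q, hqd, ?_, ?_⟩
  · rw [Polynomial.leadingCoeff, hqd, hqc]
  · intro k hk
    have hsplit : ∀ f : ℕ → ℚ,
        ∑ j ∈ Finset.Icc 1 k, f j + ∑ j ∈ Finset.Icc (k + 1) (2 * k), f j
          = ∑ j ∈ Finset.Icc 1 (2 * k), f j := by
      intro f
      rw [show Finset.Icc 1 k = Finset.Ioc 0 k from Finset.Icc_add_one_left_eq_Ioc 0 k,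
        show Finset.Icc (k + 1) (2 * k) = Finset.Ioc k (2 * k) from Finset.Icc_add_one_left_eq_Ioc k (2*k),
        show Finset.Icc 1 (2 * k) = Finset.Ioc 0 (2 * k) from Finset.Icc_add_one_left_eq_Ioc 0 (2*k)]
      exact Finset.sum_Ioc_consecutive f (Nat.zero_le k) (by omega)
    have hev : q.eval (k : ℚ) =
        2 * (∑ j ∈ Finset.Icc 1 k, (j : ℚ) ^ (n + 1))
        + 2 * k * ((∑ j ∈ Finset.Icc 1 (2 * k), (j : ℚ) ^ n)
            - ∑ j ∈ Finset.Icc 1 k, (j : ℚ) ^ n)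
        - ∑ j ∈ Finset.Icc 1 (2 * k), (j : ℚ) ^ (n + 1) := by
      have h2k : ((2 * k : ℕ) : ℚ) = 2 * (k : ℚ) := by push_cast; ring
      rw [hq, eval_sub, eval_add, eval_mul, eval_mul, eval_comp, hD, eval_sub, eval_comp,
        ht, eval_mul, eval_C, eval_X, ← h2k, faul_eval, faul_eval, faul_eval, faul_eval]
    rw [hev, powerSum]
    have e1 : ∑ j ∈ Finset.Icc (k + 1) (2 * k), ((2 * k : ℚ) - j) * (j : ℚ) ^ n
        = 2 * k * (∑ j ∈ Finset.Icc (k + 1) (2 * k), (j : ℚ) ^ n)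
          - ∑ j ∈ Finset.Icc (k + 1) (2 * k), (j : ℚ) ^ (n + 1) := by
      rw [Finset.mul_sum, ← Finset.sum_sub_distrib]
      exact Finset.sum_congr rfl fun j _ => by ring
    rw [e1]
    have h2 := hsplit (fun j => (j : ℚ) ^ n)
    have h3 := hsplit (fun j => (j : ℚ) ^ (n + 1))
    linear_combination h3 - 2 * (k : ℚ) * h2
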